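/- For every quaternion q ∈ ℍ, ‖1 − q²‖² − 4·‖Im(q)‖² = (1 − ‖q‖²)². -/

import Mathlib

/-- for every quaternion `q`, `‖1 − q²‖² − 4‖Im(q)‖² = (1 − ‖q‖²)²`. -/
theorem norm_one_sub_sq_identity (q : Quaternion ℝ) :
    ‖1 - q ^ 2‖ ^ 2 - 4 * ‖q.im‖ ^ 2 = (1 - ‖q‖ ^ 2) ^ 2 := by
  have h1 : ‖1 - q ^ 2‖ ^ 2 = Quaternion.normSq (1 - q ^ 2) := by
    rw [sq, ← Quaternion.normSq_eq_norm_mul_self]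
  have h2 : ‖q.im‖ ^ 2 = Quaternion.normSq q.im := by rw [sq, ← Quaternion.normSq_eq_norm_mul_self]
  have h3 : ‖q‖ ^ 2 = Quaternion.normSq q := by rw [sq, ← Quaternion.normSq_eq_norm_mul_self]
  rw [h1, h2, h3]
  rw [show Quaternion.normSq q.im = q.imI ^ 2 + q.imJ ^ 2 + q.imK ^ 2 by
    rw [Quaternion.normSq_def']; simp]
  simp only [Quaternion.normSq_def', Quaternion.im, pow_two]
  simp [Quaternion.re_sub, Quaternion.imI_sub, Quaternion.imJ_sub, Quaternion.imK_sub,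
    Quaternion.re_mul, Quaternion.imI_mul, Quaternion.imJ_mul, Quaternion.imK_mul,
    Quaternion.re_one, Quaternion.imI_one, Quaternion.imJ_one, Quaternion.imK_one,
    Quaternion.normSq_def']
  ring
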